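/- Let γ > 0 and let K be an m×n real matrix such that γ(A − BK) is Schur stable; write A_K = A − BK. Let S be a real symmetric n×n matrix, Y a real n×m matrix, and W a real symmetric m×m matrix satisfying the three equations: (i) γ²( A_KᵀSA_K + A_KᵀSBK + KᵀBᵀSA_K + KᵀWK + KᵀBᵀSBK − YK − KᵀYᵀ ) − S = 0; (ii) A_KᵀSB + KᵀBᵀSB − Y = 0; (iii) BᵀSB − W = 0. Then S = 0, Y = 0, and W = 0. -/

import Mathlib

open Matrix Filter Topology
open scoped ENNReal NNReal

section Aux

attribute [local instance] Matrix.linftyOpNormedAddCommGroup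
  Matrix.linftyOpNormedRing Matrix.linftyOpNormedAlgebra

variable {n : ℕ}

local instance : CompleteSpace (Matrix (Fin n) (Fin n) ℂ) :=
  FiniteDimensional.complete ℂ (Matrix (Fin n) (Fin n) ℂ)

lemma aux_spectralRadius_lt_one (M : Matrix (Fin n) (Fin n) ℂ)
    (h : ∀ μ ∈ spectrum ℂ M, ‖μ‖ < 1) : spectralRadius ℂ M < 1 := by
  rcases (spectrum ℂ M).eq_empty_or_nonempty with he | hne
  · rw [spectralRadius, he]
    simp
  · obtain ⟨μ₀, hμ₀, hmax⟩ := Set.exists_max_image _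
      (fun μ => (‖μ‖₊ : ℝ≥0∞)) (Set.toFinite _) hne
    rw [spectralRadius]
    have hle : ∀ μ ∈ spectrum ℂ M, (‖μ‖₊ : ℝ≥0∞) ≤ ‖μ₀‖₊ := by
      intro μ hμ
      rcases le_or_gt (‖μ‖₊ : ℝ≥0∞) ‖μ₀‖₊ with h' | h'
      · exact h'
      · exact hmax μ hμ
    refine lt_of_le_of_lt (iSup₂_le hle) ?_
    have := h μ₀ hμ₀
    rw [← coe_nnnorm] at this
    exact_mod_cast this

lemma aux_entry_nnnorm_le (M : Matrix (Fin n) (Fin n) ℂ) (i j : Fin n) :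
    ‖M i j‖₊ ≤ ‖M‖₊ := by
  rw [Matrix.linfty_opNNNorm_def]
  calc ‖M i j‖₊ ≤ ∑ j', ‖M i j'‖₊ :=
        Finset.single_le_sum (f := fun j' => ‖M i j'‖₊) (fun _ _ => zero_le)
          (Finset.mem_univ j)
    _ ≤ _ := Finset.le_sup (f := fun i => ∑ j', ‖M i j'‖₊) (Finset.mem_univ i)

lemma aux_pow_entry_tendsto (M : Matrix (Fin n) (Fin n) ℂ)
    (h : ∀ μ ∈ spectrum ℂ M, ‖μ‖ < 1) (i j : Fin n) :
    Tendsto (fun k : ℕ => (M ^ k) i j) atTop (𝓝 0) := by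
  have hρ := aux_spectralRadius_lt_one M h
  obtain ⟨r, hρr, hr1⟩ := ENNReal.lt_iff_exists_nnreal_btwn.mp hρ
  have hr1' : r < 1 := by exact_mod_cast hr1
  have hgel := spectrum.pow_nnnorm_pow_one_div_tendsto_nhds_spectralRadius M
  have hev : ∀ᶠ k : ℕ in atTop, (‖M ^ k‖₊ : ℝ≥0∞) ^ (1 / (k : ℝ)) < (r : ℝ≥0∞) :=
    hgel.eventually_lt_const hρr
  have hev2 : ∀ᶠ k : ℕ in atTop, ‖(M ^ k) i j‖ ≤ (r : ℝ) ^ k := by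
    filter_upwards [hev, eventually_gt_atTop 0] with k hk hk0
    have hknz : (k : ℝ) ≠ 0 := Nat.cast_ne_zero.mpr hk0.ne'
    have hb : (‖M ^ k‖₊ : ℝ≥0∞) < ((r ^ k : ℝ≥0) : ℝ≥0∞) := by
      have h2 : ((‖M ^ k‖₊ : ℝ≥0∞) ^ (1 / (k : ℝ))) ^ (k : ℝ) < (r : ℝ≥0∞) ^ (k : ℝ) :=
        ENNReal.rpow_lt_rpow hk (by positivity)
      rw [← ENNReal.rpow_mul, one_div, inv_mul_cancel₀ hknz, ENNReal.rpow_one,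
        ENNReal.rpow_natCast, ← ENNReal.coe_pow] at h2
      exact h2
    have hb' : ‖M ^ k‖ ≤ (r : ℝ) ^ k := by
      have := (ENNReal.coe_lt_coe.mp hb).le
      calc ‖M ^ k‖ = ((‖M ^ k‖₊ : ℝ≥0) : ℝ) := rfl
        _ ≤ ((r ^ k : ℝ≥0) : ℝ) := by exact_mod_cast this
        _ = (r : ℝ) ^ k := by push_cast; ring
    calc ‖(M ^ k) i j‖ ≤ ‖M ^ k‖ := aux_entry_nnnorm_le (M ^ k) i j
      _ ≤ (r : ℝ) ^ k := hb'
  rw [tendsto_zero_iff_norm_tendsto_zero]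
  refine squeeze_zero' (Eventually.of_forall fun k => norm_nonneg _) hev2 ?_
  exact tendsto_pow_atTop_nhds_zero_of_lt_one r.coe_nonneg (by exact_mod_cast hr1')

end Aux

lemma aux_real_pow_entry_tendsto {n : ℕ} (N : Matrix (Fin n) (Fin n) ℝ)
    (h : ∀ μ ∈ spectrum ℂ (N.map (algebraMap ℝ ℂ)), ‖μ‖ < 1) (i j : Fin n) :
    Tendsto (fun k : ℕ => (N ^ k) i j) atTop (𝓝 0) := by
  have h0 := aux_pow_entry_tendsto (N.map (algebraMap ℝ ℂ)) h i j
  have hmap : ∀ k : ℕ, (N.map (algebraMap ℝ ℂ)) ^ k = (N ^ k).map (algebraMap ℝ ℂ) := by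
    intro k
    simpa [RingHom.mapMatrix_apply] using
      (map_pow ((algebraMap ℝ ℂ).mapMatrix) N k).symm
  simp only [hmap, Matrix.map_apply] at h0
  have := (Complex.continuous_re.tendsto 0).comp h0
  simpa [Function.comp_def] using this

/-- A real square matrix is Schur stable if every eigenvalue of it, viewed as a
complex matrix, has modulus strictly less than `1`. -/
def SchurStable {n : ℕ} (M : Matrix (Fin n) (Fin n) ℝ) : Prop :=
  ∀ μ ∈ spectrum ℂ (M.map (algebraMap ℝ ℂ)), ‖μ‖ < 1

theorem stmt_11 {n m : ℕ}
    (A : Matrix (Fin n) (Fin n) ℝ) (B : Matrix (Fin n) (Fin m) ℝ)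
    (γ : ℝ) (hγ : 0 < γ)
    (K : Matrix (Fin m) (Fin n) ℝ)
    (hK : SchurStable (γ • (A - B * K)))
    (AK : Matrix (Fin n) (Fin n) ℝ) (hAK : AK = A - B * K)
    (S : Matrix (Fin n) (Fin n) ℝ) (hSsymm : S.IsSymm)
    (Y : Matrix (Fin n) (Fin m) ℝ)
    (W : Matrix (Fin m) (Fin m) ℝ) (hWsymm : W.IsSymm)
    (h1 : γ ^ 2 • (AKᵀ * S * AK + AKᵀ * S * B * K + Kᵀ * Bᵀ * S * AK + Kᵀ * W * K
        + Kᵀ * Bᵀ * S * B * K - Y * K - Kᵀ * Yᵀ) - S = 0)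
    (h2 : AKᵀ * S * B + Kᵀ * Bᵀ * S * B - Y = 0)
    (h3 : Bᵀ * S * B - W = 0) :
    S = 0 ∧ Y = 0 ∧ W = 0 := by
  have hW : W = Bᵀ * S * B := (sub_eq_zero.mp h3).symm
  have hY : Y = AKᵀ * S * B + Kᵀ * Bᵀ * S * B := (sub_eq_zero.mp h2).symm
  have hSt : Sᵀ = S := hSsymm
  set M : Matrix (Fin n) (Fin n) ℝ := γ • AK with hM
  have hSchurM : SchurStable M := by rw [hM, hAK]; exact hK
  rw [sub_eq_zero, hW, hY] at h1
  have ht : (AKᵀ * S * B + Kᵀ * Bᵀ * S * B)ᵀ = Bᵀ * S * AK + Bᵀ * S * B * K := by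
    simp [transpose_add, transpose_mul, transpose_transpose, hSt, Matrix.mul_assoc]
  have hQ : (AKᵀ * S * B + Kᵀ * Bᵀ * S * B) * K + Kᵀ * (Bᵀ * S * AK + Bᵀ * S * B * K)
      = AKᵀ * S * B * K + Kᵀ * Bᵀ * S * AK + Kᵀ * (Bᵀ * S * B) * K
        + Kᵀ * Bᵀ * S * B * K := by
    simp only [Matrix.mul_add, Matrix.add_mul, Matrix.mul_assoc]
    abel
  have hbig : AKᵀ * S * AK + AKᵀ * S * B * K + Kᵀ * Bᵀ * S * AK
      + Kᵀ * (Bᵀ * S * B) * K + Kᵀ * Bᵀ * S * B * K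
      - (AKᵀ * S * B + Kᵀ * Bᵀ * S * B) * K
      - Kᵀ * (AKᵀ * S * B + Kᵀ * Bᵀ * S * B)ᵀ
      = AKᵀ * S * AK := by
    rw [sub_sub, ht, hQ]
    abel
  rw [hbig] at h1
  have hkey : Mᵀ * S * M = S := by
    calc Mᵀ * S * M = γ ^ 2 • (AKᵀ * S * AK) := by
          rw [hM, transpose_smul, smul_mul_assoc, smul_mul_assoc, mul_smul_comm,
            smul_smul, sq]
      _ = S := h1
  have hiter : ∀ k : ℕ, (M ^ k)ᵀ * S * (M ^ k) = S := by
    intro k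
    induction k with
    | zero => simp
    | succ k ih =>
      rw [pow_succ, transpose_mul]
      calc Mᵀ * (M ^ k)ᵀ * S * (M ^ k * M)
          = Mᵀ * ((M ^ k)ᵀ * S * M ^ k) * M := by
            simp only [Matrix.mul_assoc]
        _ = Mᵀ * S * M := by rw [ih]
        _ = S := hkey
  have hent : ∀ i j, Tendsto (fun k : ℕ => (M ^ k) i j) atTop (𝓝 0) :=
    fun i j => aux_real_pow_entry_tendsto M hSchurM i j
  have hS0 : S = 0 := by
    ext i j
    have h0 : Tendsto (fun k : ℕ => ((M ^ k)ᵀ * S * (M ^ k)) i j) atTop (𝓝 0) := by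
      simp only [Matrix.mul_apply, Matrix.transpose_apply]
      have : Tendsto (fun k : ℕ => ∑ b, (∑ a, (M ^ k) a i * S a b) * (M ^ k) b j)
          atTop (𝓝 (∑ b : Fin n, (∑ a : Fin n, 0 * S a b) * 0)) := by
        refine tendsto_finset_sum _ fun b _ => ?_
        exact (tendsto_finset_sum _ fun a _ => (hent a i).mul_const (S a b)).mul (hent b j)
      simpa using this
    have heq : (fun k : ℕ => ((M ^ k)ᵀ * S * (M ^ k)) i j) = fun _ => S i j :=
      funext fun k => by rw [hiter k]
    rw [heq] at h0
    have := tendsto_nhds_unique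
      (tendsto_const_nhds : Tendsto (fun _ : ℕ => S i j) atTop (𝓝 (S i j))) h0
    simpa using this
  exact ⟨hS0, by simp [hY, hS0], by simp [hW, hS0]⟩
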